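/- Let π be a group, R a commutative ring, A = R[π], and let ∂₁, …, ∂_m be left Fox derivatives in A (m ≥ 1). Let p : A → Ǎ = A/A' be the projection and let Δ̌_{∂ᵢ} : Ǎ → A be the map induced by Δ_{∂ᵢ} (which vanishes on A'). Then the m-linear map μ^m : Ǎ^m → Ǎ defined by μ^m(x₁, …, x_m) = p( Δ̌_{∂₁}(x₁) · Δ̌_{∂₂}(x₂) ⋯ Δ̌_{∂_m}(x_m) ) is an m-brace in A: for each index i and each fixed choice of the other m−1 arguments, the induced endomorphism of Ǎ is induced by a derivation of A. -/

import Mathlib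

open MonoidAlgebra Finsupp

section Aux

variable {R : Type*} [CommRing R] {G : Type*} [Group G]

lemma aux_mk_mul_comm (A' : Submodule R (MonoidAlgebra R G))
    (hA' : A' = Submodule.span R
      {z : MonoidAlgebra R G | ∃ u v : MonoidAlgebra R G, z = u * v - v * u})
    (u v : MonoidAlgebra R G) :
    (Submodule.Quotient.mk (u * v) : MonoidAlgebra R G ⧸ A')
      = Submodule.Quotient.mk (v * u) := by
  rw [Submodule.Quotient.eq, hA']
  exact Submodule.subset_span ⟨u, v, rfl⟩

lemma aux_single_one_mul (x : G) (f : MonoidAlgebra R G) :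
    ((MonoidAlgebra.of R G x) * f).coeff = Finsupp.mapDomain (fun b => x * b) f.coeff := by
  rw [MonoidAlgebra.of_apply, MonoidAlgebra.mul_def, MonoidAlgebra.coeff_single,
    Finsupp.sum_single_index]
  · simp [Finsupp.mapDomain, MonoidAlgebra.coeff_finsuppSum, MonoidAlgebra.coeff_single]
  · simp

end Aux

theorem stmt8 (R : Type*) [CommRing R] (G : Type*) [Group G] (m : ℕ) (hm : 1 ≤ m)
    (D : Fin m → (MonoidAlgebra R G →ₗ[R] MonoidAlgebra R G))
    (hFox : ∀ (i : Fin m) (x y : G),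
      D i (MonoidAlgebra.of R G x * MonoidAlgebra.of R G y)
        = D i (MonoidAlgebra.of R G x) + MonoidAlgebra.of R G x * D i (MonoidAlgebra.of R G y))
    (Δ : Fin m → (MonoidAlgebra R G →ₗ[R] MonoidAlgebra R G))
    (hΔ : ∀ (i : Fin m) (x : G), Δ i (MonoidAlgebra.of R G x)
        = (D i (MonoidAlgebra.of R G x)).coeff.sum
            (fun a r => r • MonoidAlgebra.of R G (a⁻¹ * x * a)))
    (A' : Submodule R (MonoidAlgebra R G))
    (hA' : A' = Submodule.span R
      {z : MonoidAlgebra R G | ∃ u v : MonoidAlgebra R G, z = u * v - v * u})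
    (hvanish : ∀ (i : Fin m), ∀ a ∈ A', Δ i a = 0)
    (Δbar : Fin m → ((MonoidAlgebra R G ⧸ A') →ₗ[R] MonoidAlgebra R G))
    (hΔbar : ∀ (i : Fin m) (a : MonoidAlgebra R G),
      Δbar i (Submodule.Quotient.mk a) = Δ i a) :
    ∀ (i : Fin m) (x : Fin m → (MonoidAlgebra R G ⧸ A')),
      ∃ d : MonoidAlgebra R G →ₗ[R] MonoidAlgebra R G,
        (∀ u v : MonoidAlgebra R G, d (u * v) = d u * v + u * d v) ∧
        ∀ a : MonoidAlgebra R G,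
          (Submodule.Quotient.mk (d a) : MonoidAlgebra R G ⧸ A')
            = Submodule.Quotient.mk
                (List.ofFn (fun j =>
                  Δbar j (Function.update x i (Submodule.Quotient.mk a) j))).prod := by
  classical
  intro i x
  set of' := MonoidAlgebra.of R G with hof
  set ℓ0 : List (MonoidAlgebra R G) := List.ofFn (fun j => Δbar j (x j)) with hℓ0
  set P : MonoidAlgebra R G := (ℓ0.take i.val).prod with hP
  set Q : MonoidAlgebra R G := (ℓ0.drop (i.val + 1)).prod with hQ
  set c : MonoidAlgebra R G := Q * P with hc
  set T : G → MonoidAlgebra R G :=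
    fun g => (D i (of' g)).coeff.sum (fun a s => s • (of' a * c * of' a⁻¹ * of' g)) with hT
  set d : MonoidAlgebra R G →ₗ[R] MonoidAlgebra R G :=
    Finsupp.lsum R (fun g => LinearMap.toSpanSingleton R _ (T g)) ∘ₗ
      (MonoidAlgebra.coeffLinearEquiv R).toLinearMap with hd
  have hd_single : ∀ (g : G) (r : R), d (MonoidAlgebra.single g r) = r • T g := by
    intro g r
    rw [hd]
    exact (Finsupp.lsum_single R (fun g => LinearMap.toSpanSingleton R (MonoidAlgebra R G) (T g)) g r).trans (LinearMap.toSpanSingleton_apply R _ (T g) r)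
  have hd_of : ∀ g : G, d (of' g) = T g := by
    intro g
    rw [hof, MonoidAlgebra.of_apply, hd_single, one_smul]
  have mkc := aux_mk_mul_comm A' hA'
  -- Leibniz on group elements
  have key : ∀ g h : G, T (g * h) = T g * of' h + of' g * T h := by
    intro g h
    have h1 : of' (g * h) = of' g * of' h := map_mul of' g h
    have h2 : D i (of' (g * h)) = D i (of' g) + of' g * D i (of' h) := by
      rw [h1]; exact hFox i g h
    rw [hT]
    simp only [h2, MonoidAlgebra.coeff_add]
    rw [Finsupp.sum_add_index (by intro a _; simp) (by intro a _ r s; rw [add_smul])]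
    congr 1
    · rw [Finsupp.sum_mul]
      apply Finsupp.sum_congr
      intro a _
      rw [smul_mul_assoc, h1]
      congr 1
      noncomm_ring
    · rw [aux_single_one_mul g (D i (of' h)),
        Finsupp.sum_mapDomain_index_inj (mul_right_injective g)]
      rw [Finsupp.mul_sum]
      apply Finsupp.sum_congr
      intro b _
      rw [mul_smul_comm]
      congr 1
      have e3 : of' (g * b) = of' g * of' b := map_mul of' g b
      have hinv : of' (g * b)⁻¹ = of' b⁻¹ * of' g⁻¹ := by
        rw [mul_inv_rev]; exact map_mul of' b⁻¹ g⁻¹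
      rw [e3, hinv, h1]
      have hg : of' g⁻¹ * of' g = 1 := by
        rw [← map_mul]; simp
      calc of' g * of' b * c * (of' b⁻¹ * of' g⁻¹) * (of' g * of' h)
          = of' g * (of' b * c * of' b⁻¹ * ((of' g⁻¹ * of' g) * of' h)) := by
            noncomm_ring
        _ = of' g * (of' b * c * of' b⁻¹ * of' h) := by rw [hg, one_mul]
  have hLeib : ∀ u v : MonoidAlgebra R G, d (u * v) = d u * v + u * d v := by
    intro u v
    have hbil : (LinearMap.mul R (MonoidAlgebra R G)).compr₂ d
        = (LinearMap.mul R (MonoidAlgebra R G)).comp d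
          + (LinearMap.mul R (MonoidAlgebra R G)).compl₂ d := by
      apply MonoidAlgebra.lhom_ext'
      intro g
      apply LinearMap.ext
      intro r
      apply MonoidAlgebra.lhom_ext'
      intro h
      apply LinearMap.ext
      intro s
      simp only [LinearMap.compr₂_apply, LinearMap.comp_apply, LinearMap.add_apply,
        LinearMap.compl₂_apply, LinearMap.mul_apply', MonoidAlgebra.lsingle_apply]
      rw [MonoidAlgebra.single_mul_single, hd_single, hd_single, hd_single]
      rw [key g h, smul_add]
      congr 1
      · rw [smul_mul_assoc, mul_smul]
        congr 1
        have : (MonoidAlgebra.single h s : MonoidAlgebra R G) = s • of' h := by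
          rw [hof, MonoidAlgebra.of_apply, MonoidAlgebra.smul_single', mul_one]
        rw [this, mul_smul_comm]
      · have : (MonoidAlgebra.single g r : MonoidAlgebra R G) = r • of' g := by
          rw [hof, MonoidAlgebra.of_apply, MonoidAlgebra.smul_single', mul_one]
        rw [this, smul_mul_assoc, mul_smul_comm, smul_smul, mul_smul]
    have h2 := LinearMap.congr_fun (LinearMap.congr_fun hbil u) v
    simp only [LinearMap.compr₂_apply, LinearMap.comp_apply, LinearMap.add_apply,
      LinearMap.compl₂_apply, LinearMap.mul_apply'] at h2
    exact h2
  -- mod A', d a = Δ i a * c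
  have hmod : ∀ a : MonoidAlgebra R G,
      (Submodule.Quotient.mk (d a) : MonoidAlgebra R G ⧸ A')
        = Submodule.Quotient.mk (Δ i a * c) := by
    have hlin : A'.mkQ.comp d
        = A'.mkQ.comp ((LinearMap.mulRight R c).comp (Δ i)) := by
      apply MonoidAlgebra.lhom_ext'
      intro g
      apply LinearMap.ext
      intro r
      simp only [LinearMap.comp_apply, MonoidAlgebra.lsingle_apply, hd_single,
        LinearMap.mulRight_apply]
      have hrg : (MonoidAlgebra.single g r : MonoidAlgebra R G) = r • of' g := by
        rw [hof, MonoidAlgebra.of_apply, MonoidAlgebra.smul_single', mul_one]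
      rw [hrg, map_smul, map_smul, smul_mul_assoc, map_smul]
      congr 1
      rw [hΔ i g, Finsupp.sum_mul, map_finsuppSum, map_finsuppSum]
      apply Finsupp.sum_congr
      intro a _
      rw [smul_mul_assoc, LinearMap.map_smul, LinearMap.map_smul]
      congr 1
      have step1 : (A'.mkQ) (of' a * c * of' a⁻¹ * of' g)
          = A'.mkQ ((c * of' a⁻¹ * of' g) * of' a) := by
        have e : of' a * c * of' a⁻¹ * of' g = of' a * (c * of' a⁻¹ * of' g) := by
          noncomm_ring
        rw [e]
        have := mkc (of' a) (c * of' a⁻¹ * of' g)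
        simpa [Submodule.mkQ_apply] using this
      rw [step1]
      have step2 : (c * of' a⁻¹ * of' g) * of' a = c * of' (a⁻¹ * g * a) := by
        rw [map_mul, map_mul]; noncomm_ring
      rw [step2]
      have := mkc c (of' (a⁻¹ * g * a))
      simpa [Submodule.mkQ_apply] using this
    intro a
    have := congrArg (fun F => F a) hlin
    simpa using this
  refine ⟨d, hLeib, ?_⟩
  intro a
  set ℓ : List (MonoidAlgebra R G) := List.ofFn (fun j =>
    Δbar j (Function.update x i (Submodule.Quotient.mk a) j)) with hℓ
  have hlen : ℓ.length = m := by simp [hℓ]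
  have him : i.val < ℓ.length := by rw [hlen]; exact i.isLt
  have htake : ℓ.take i.val = ℓ0.take i.val := by
    apply List.ext_getElem
    · simp [hℓ, hℓ0]
    · intro j h1 h2
      simp only [List.getElem_take, hℓ, hℓ0, List.getElem_ofFn]
      congr 1
      apply Function.update_of_ne
      have hji : j < i.val := by
        simp [hℓ, List.length_take] at h1
        omega
      intro hcon
      have : j = i.val := congrArg Fin.val hcon
      omega
  have hdrop : ℓ.drop (i.val + 1) = ℓ0.drop (i.val + 1) := by
    apply List.ext_getElem
    · simp [hℓ, hℓ0]
    · intro j h1 h2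
      simp only [List.getElem_drop, hℓ, hℓ0, List.getElem_ofFn]
      congr 1
      apply Function.update_of_ne
      intro hcon
      have : i.val + 1 + j = i.val := congrArg Fin.val hcon
      omega
  have hgeti : getElem ℓ i.val him = Δ i a := by
    simp only [hℓ, List.getElem_ofFn, Fin.eta, Function.update_self]
    exact hΔbar i a
  have hprod : ℓ.prod = P * (Δ i a * Q) := by
    conv_lhs => rw [← List.take_append_drop i.val ℓ]
    rw [List.prod_append, List.drop_eq_getElem_cons him, List.prod_cons]
    rw [htake, hgeti, hdrop, hP, hQ]
  rw [hmod a, hprod]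
  have c1 : (Submodule.Quotient.mk (P * (Δ i a * Q)) : MonoidAlgebra R G ⧸ A')
      = Submodule.Quotient.mk ((Δ i a * Q) * P) := mkc P (Δ i a * Q)
  rw [c1]
  congr 1
  rw [hc, mul_assoc]
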